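/- arXiv:2103.04861 — 2 statements merged into one kernel-verified Lean document; each statement's English description precedes it below -/
import Mathlib

section
/- Fix an integer n ≥ 0 and positive real constants S₁, S₂, and set f(r) = S₁ · P_{n+1}(r) − S₂ · P_n(r) for r > 0. If S₁/(2n+4) − S₂/(2n+2) > 0 (i.e., the limit of f at 0⁺ is positive), then f(r) > 0 for all r > 0. -/
open Real Filter Set

/-- Modified Bessel function of the first kind of (integer) order `n`. -/
noncomputable def besselI (n : ℕ) (r : ℝ) : ℝ :=
  ∑' k : ℕ, (1 / (k.factorial * Real.Gamma (n + k + 1))) * (r / 2) ^ (n + 2 * k)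

/-- `P n r = I_{n+1}(r) / (r * I_n(r))`. -/
noncomputable def P (n : ℕ) (r : ℝ) : ℝ := besselI (n + 1) r / (r * besselI n r)

noncomputable def bterm (n k : ℕ) (x : ℝ) : ℝ :=
  x ^ (n + 2 * k) / (k.factorial * (n + k).factorial)

noncomputable def bcoef (n k : ℕ) : ℝ := 1 / (k.factorial * (n + k).factorial)

lemma besselI_eq (n : ℕ) (r : ℝ) : besselI n r = ∑' k, bterm n k (r / 2) := by
  unfold besselI bterm
  congr 1; funext k
  have h : ((n : ℝ) + k + 1) = ((n + k : ℕ) : ℝ) + 1 := by push_cast; ring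
  rw [h, Real.Gamma_nat_eq_factorial, mul_comm, mul_one_div]

lemma bterm_nonneg (n k : ℕ) {x : ℝ} (hx : 0 ≤ x) : 0 ≤ bterm n k x := by
  unfold bterm; positivity

lemma bterm_summable (n : ℕ) {x : ℝ} (hx : 0 ≤ x) : Summable (fun k => bterm n k x) := by
  refine Summable.of_nonneg_of_le (fun k => bterm_nonneg n k hx) (fun k => ?_)
    ((Real.summable_pow_div_factorial (x ^ 2)).mul_left (x ^ n))
  have h1 : (1:ℝ) ≤ ((n+k).factorial : ℝ) := by exact_mod_cast (n+k).factorial_pos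
  calc bterm n k x = x ^ n * ((x ^ 2) ^ k / (k.factorial * (n+k).factorial)) := by
        unfold bterm; rw [pow_add, pow_mul, mul_div_assoc]
    _ ≤ x ^ n * ((x ^ 2) ^ k / k.factorial) := by
        gcongr
        exact le_mul_of_one_le_right (by positivity) h1

lemma bterm_norm_summable (n : ℕ) {x : ℝ} (hx : 0 ≤ x) :
    Summable (fun k => ‖bterm n k x‖) := by
  refine (bterm_summable n hx).congr fun k => ?_
  rw [Real.norm_eq_abs, abs_of_nonneg (bterm_nonneg n k hx)]

lemma besselI_pos (n : ℕ) {r : ℝ} (hr : 0 < r) : 0 < besselI n r := by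
  have hx : (0:ℝ) < r / 2 := by linarith
  rw [besselI_eq]
  refine Summable.tsum_pos (bterm_summable n hx.le) (fun k => bterm_nonneg n k hx.le) 0 ?_
  unfold bterm
  exact div_pos (pow_pos hx _) (by positivity)

lemma core' (n k j : ℕ) :
    2 * ((n:ℝ) + 1) / (((n:ℝ) + k + 1) * ((n:ℝ) + j + 1)) ≤
      ((n:ℝ) + 2) * (1 / ((((n:ℝ) + j + 2)) * ((n:ℝ) + j + 1)) +
        1 / ((((n:ℝ) + k + 2)) * ((n:ℝ) + k + 1))) := by
  have hn : (0:ℝ) ≤ n := Nat.cast_nonneg n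
  have hk : (0:ℝ) ≤ k := Nat.cast_nonneg k
  have hj : (0:ℝ) ≤ j := Nat.cast_nonneg j
  rw [div_add_div _ _ (by positivity) (by positivity), ← mul_div_assoc,
    div_le_div_iff₀ (by positivity) (by positivity)]
  nlinarith [mul_nonneg (mul_nonneg (by positivity :
      (0:ℝ) ≤ ((n:ℝ)+k+1)*((n:ℝ)+j+1)) (sq_nonneg ((k:ℝ) - j))) (by linarith : (0:ℝ) ≤ (n:ℝ)+2),
    mul_nonneg (mul_nonneg (by positivity : (0:ℝ) ≤ ((n:ℝ)+k+1)*((n:ℝ)+j+1)) (by linarith : (0:ℝ) ≤ (k:ℝ)+j)) (by linarith : (0:ℝ) ≤ (n:ℝ)+2),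
    mul_nonneg (by positivity : (0:ℝ) ≤ ((n:ℝ)+k+1)*((n:ℝ)+j+1)) (mul_nonneg hk hj)]

lemma fact1 (n k : ℕ) : ((n + 1 + k).factorial : ℝ) = ((n:ℝ) + k + 1) * (n + k).factorial := by
  rw [show n + 1 + k = (n + k) + 1 by omega, Nat.factorial_succ]
  push_cast; ring

lemma fact2 (n k : ℕ) : ((n + 2 + k).factorial : ℝ) =
    ((n:ℝ) + k + 2) * (((n:ℝ) + k + 1) * (n + k).factorial) := by
  rw [show n + 2 + k = ((n + k) + 1) + 1 by omega, Nat.factorial_succ, Nat.factorial_succ]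
  push_cast; ring

lemma key_term (n k j : ℕ) :
    2 * ((n:ℝ) + 1) * (bcoef (n+1) k * bcoef (n+1) j) ≤
      ((n:ℝ) + 2) * (bcoef n k * bcoef (n+2) j + bcoef n j * bcoef (n+2) k) := by
  have hK : ((k.factorial : ℝ)) ≠ 0 := by positivity
  have hJ : ((j.factorial : ℝ)) ≠ 0 := by positivity
  have hPk : (((n+k).factorial : ℝ)) ≠ 0 := by positivity
  have hPj : (((n+j).factorial : ℝ)) ≠ 0 := by positivity
  have hp1 : ((n:ℝ) + k + 1) ≠ 0 := by positivity
  have hp2 : ((n:ℝ) + k + 2) ≠ 0 := by positivity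
  have hq1 : ((n:ℝ) + j + 1) ≠ 0 := by positivity
  have hq2 : ((n:ℝ) + j + 2) ≠ 0 := by positivity
  set u : ℝ := 1 / ((k.factorial : ℝ) * j.factorial * (n+k).factorial * (n+j).factorial) with hu
  have hupos : 0 < u := by rw [hu]; positivity
  have e1 : bcoef (n+1) k * bcoef (n+1) j = u * (1 / (((n:ℝ) + k + 1) * ((n:ℝ) + j + 1))) := by
    unfold bcoef
    rw [fact1 n k, fact1 n j, hu]
    field_simp
  have e2 : bcoef n k * bcoef (n+2) j = u * (1 / (((n:ℝ) + j + 2) * ((n:ℝ) + j + 1))) := by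
    unfold bcoef
    rw [fact2 n j, hu]
    field_simp
  have e3 : bcoef n j * bcoef (n+2) k = u * (1 / (((n:ℝ) + k + 2) * ((n:ℝ) + k + 1))) := by
    unfold bcoef
    rw [fact2 n k, hu]
    field_simp
  rw [e1, e2, e3]
  calc 2 * ((n:ℝ) + 1) * (u * (1 / (((n:ℝ) + k + 1) * ((n:ℝ) + j + 1))))
      = u * (2 * ((n:ℝ) + 1) / (((n:ℝ) + k + 1) * ((n:ℝ) + j + 1))) := by ring
    _ ≤ u * (((n:ℝ) + 2) * (1 / ((((n:ℝ) + j + 2)) * ((n:ℝ) + j + 1)) +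
        1 / ((((n:ℝ) + k + 2)) * ((n:ℝ) + k + 1)))) :=
        mul_le_mul_of_nonneg_left (core' n k j) hupos.le
    _ = ((n:ℝ) + 2) * (u * (1 / (((n:ℝ) + j + 2) * ((n:ℝ) + j + 1))) +
        u * (1 / (((n:ℝ) + k + 2) * ((n:ℝ) + k + 1)))) := by ring

lemma key_sum (n m : ℕ) :
    ((n:ℝ) + 1) * ∑ k ∈ Finset.range (m+1), bcoef (n+1) k * bcoef (n+1) (m-k) ≤
      ((n:ℝ) + 2) * ∑ k ∈ Finset.range (m+1), bcoef n k * bcoef (n+2) (m-k) := by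
  have h1 : ∑ k ∈ Finset.range (m+1), bcoef n (m-k) * bcoef (n+2) k =
      ∑ k ∈ Finset.range (m+1), bcoef n k * bcoef (n+2) (m-k) := by
    rw [← Finset.sum_range_reflect]
    refine Finset.sum_congr rfl fun k hk => ?_
    have hk' : k ≤ m := Nat.lt_succ_iff.mp (Finset.mem_range.mp hk)
    congr 2 <;> omega
  have h2 : ∀ k ∈ Finset.range (m+1),
      2 * ((n:ℝ) + 1) * (bcoef (n+1) k * bcoef (n+1) (m-k)) ≤
      ((n:ℝ) + 2) * (bcoef n k * bcoef (n+2) (m-k) + bcoef n (m-k) * bcoef (n+2) k) :=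
    fun k _ => key_term n k (m-k)
  have h3 := Finset.sum_le_sum h2
  rw [← Finset.mul_sum, ← Finset.mul_sum, Finset.sum_add_distrib, h1] at h3
  linarith

lemma sum_eq (a b m : ℕ) (x : ℝ) :
    ∑ k ∈ Finset.range (m+1), bterm a k x * bterm b (m-k) x =
      x ^ (a + b + 2*m) * ∑ k ∈ Finset.range (m+1), bcoef a k * bcoef b (m-k) := by
  rw [Finset.mul_sum]
  refine Finset.sum_congr rfl fun k hk => ?_
  have hk' : k ≤ m := Nat.lt_succ_iff.mp (Finset.mem_range.mp hk)
  unfold bterm bcoef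
  rw [div_mul_div_comm, ← pow_add, show a + 2*k + (b + 2*(m-k)) = a + b + 2*m by omega]
  rw [div_mul_div_comm, one_mul, mul_one_div]

lemma prod_eq (a b : ℕ) {x : ℝ} (hx : 0 ≤ x) :
    (∑' k, bterm a k x) * (∑' k, bterm b k x) =
      ∑' m, x ^ (a + b + 2*m) * ∑ k ∈ Finset.range (m+1), bcoef a k * bcoef b (m-k) := by
  rw [tsum_mul_tsum_eq_tsum_sum_range_of_summable_norm (bterm_norm_summable a hx)
    (bterm_norm_summable b hx)]
  exact tsum_congr fun m => sum_eq a b m x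

lemma prod_summable (a b : ℕ) {x : ℝ} (hx : 0 ≤ x) :
    Summable (fun m => x ^ (a + b + 2*m) * ∑ k ∈ Finset.range (m+1), bcoef a k * bcoef b (m-k)) := by
  refine ((summable_norm_sum_mul_range_of_summable_norm (bterm_norm_summable a hx)
    (bterm_norm_summable b hx)).of_norm).congr fun m => sum_eq a b m x

lemma turan (n : ℕ) {r : ℝ} (hr : 0 < r) :
    ((n:ℝ) + 1) * (besselI (n+1) r)^2 ≤ ((n:ℝ) + 2) * (besselI n r * besselI (n+2) r) := by
  have hx : (0:ℝ) ≤ r / 2 := by linarith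
  rw [besselI_eq, besselI_eq, besselI_eq, sq, prod_eq (n+1) (n+1) hx, prod_eq n (n+2) hx,
    ← tsum_mul_left, ← tsum_mul_left]
  refine Summable.tsum_le_tsum (fun m => ?_) ((prod_summable (n+1) (n+1) hx).mul_left _)
    ((prod_summable n (n+2) hx).mul_left _)
  rw [show n + 1 + (n + 1) + 2*m = 2*n+2+2*m by omega, show n + (n + 2) + 2*m = 2*n+2+2*m by omega]
  have h := mul_le_mul_of_nonneg_left (key_sum n m) (pow_nonneg hx (2*n+2+2*m))
  nlinarith [h]

theorem P_combination_pos (n : ℕ) (S₁ S₂ : ℝ) (hS₁ : 0 < S₁) (hS₂ : 0 < S₂)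
    (h0 : S₁ / (2 * (n : ℝ) + 4) - S₂ / (2 * (n : ℝ) + 2) > 0) :
    ∀ r : ℝ, 0 < r → S₁ * P (n + 1) r - S₂ * P n r > 0 := by
  intro r hr
  have hC := besselI_pos n hr
  have hB := besselI_pos (n+1) hr
  have hA := besselI_pos (n+2) hr
  have hS : S₂ * ((n:ℝ) + 2) < S₁ * ((n:ℝ) + 1) := by
    rw [gt_iff_lt, sub_pos, div_lt_div_iff₀ (by positivity) (by positivity)] at h0
    nlinarith [h0]
  have ht := turan n hr
  set A := besselI (n+2) r
  set B := besselI (n+1) r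
  set C := besselI n r
  unfold P
  rw [gt_iff_lt, sub_pos]
  have eA : besselI (n+1+1) r = A := by rfl
  rw [eA]
  rw [← mul_div_assoc, ← mul_div_assoc, div_lt_div_iff₀ (by positivity) (by positivity)]
  have h1 : S₂ * ((n:ℝ)+2) * B^2 < S₁ * ((n:ℝ)+1) * B^2 := by nlinarith [mul_pos hB hB]
  have h2 : S₁ * ((n:ℝ)+1) * B^2 ≤ S₁ * (((n:ℝ)+2) * (C * A)) := by
    nlinarith [mul_le_mul_of_nonneg_left ht hS₁.le]
  have h3 : S₂ * B^2 < S₁ * (C * A) := by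
    have hn2 : (0:ℝ) < (n:ℝ) + 2 := by positivity
    nlinarith [h1.trans_le h2]
  nlinarith [h3, hr, mul_pos hB hB, mul_pos hC hA]
end

section
/- For every integer n ≥ 2 and every r > 0, the function G_n(r) = r²·(P_1(r) − P_n(r)) is strictly increasing in r, and G_n(r) → 0 as r → 0⁺ while G_n(r) → n − 1 as r → ∞. -/
open Real Filter Set

namespace BesselAux

/-- coefficient of the Bessel series -/
noncomputable def a (m k : ℕ) : ℝ := 1 / (k.factorial * (m + k).factorial)

lemma a_pos (m k : ℕ) : 0 < a m k := by
  unfold a; positivity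

lemma besselI_eq (m : ℕ) (r : ℝ) :
    besselI m r = ∑' k : ℕ, a m k * (r / 2) ^ (m + 2 * k) := by
  unfold besselI a
  congr 1; funext k
  have : (m : ℝ) + k + 1 = ((m + k : ℕ) : ℝ) + 1 := by push_cast; ring
  rw [this, Real.Gamma_nat_eq_factorial]

lemma choose_le_two_pow (m k : ℕ) : m.choose k ≤ 2 ^ m := by
  rcases le_or_gt k m with h | h
  · calc m.choose k ≤ ∑ i ∈ Finset.range (m + 1), m.choose i :=
        Finset.single_le_sum (f := fun i => m.choose i) (fun _ _ => Nat.zero_le _)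
          (Finset.mem_range.2 (Nat.lt_succ_of_le h))
    _ = 2 ^ m := Nat.sum_range_choose m
  · rw [Nat.choose_eq_zero_of_lt h]; exact Nat.zero_le _

lemma summable_norm_term (m : ℕ) (q : ℝ) :
    Summable fun k : ℕ => ‖a m k * q ^ (m + 2 * k)‖ := by
  have h := (Real.summable_pow_div_factorial (|q| ^ 2)).mul_left (|q| ^ m)
  apply Summable.of_nonneg_of_le (fun k => norm_nonneg _) _ h
  intro k
  rw [norm_mul, norm_pow, Real.norm_eq_abs, Real.norm_eq_abs]
  have h1 : |a m k| = a m k := abs_of_pos (a_pos m k)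
  rw [h1]
  have h2 : |q| ^ (m + 2 * k) = |q| ^ m * (|q| ^ 2) ^ k := by
    rw [pow_add, pow_mul]
  rw [h2]
  have ha : a m k ≤ (k.factorial : ℝ)⁻¹ := by
    unfold a
    rw [one_div]
    apply inv_anti₀ (by positivity)
    have : (1:ℝ) ≤ (m+k).factorial := by exact_mod_cast (m+k).factorial_pos
    nlinarith [(Nat.cast_pos (α := ℝ)).mpr (Nat.factorial_pos k)]
  calc a m k * (|q| ^ m * (|q| ^ 2) ^ k) ≤ (↑k.factorial)⁻¹ * (|q| ^ m * (|q| ^ 2) ^ k) := by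
        gcongr
    _ = |q| ^ m * ((|q| ^ 2) ^ k / ↑k.factorial) := by ring

lemma summable_term (m : ℕ) (q : ℝ) :
    Summable fun k : ℕ => a m k * q ^ (m + 2 * k) :=
  (summable_norm_term m q).of_norm

lemma besselI_pos (m : ℕ) {r : ℝ} (hr : 0 < r) : 0 < besselI m r := by
  rw [besselI_eq]
  have hr2 : (0:ℝ) < r / 2 := by linarith
  apply Summable.tsum_pos (summable_term m (r/2)) (fun k => mul_nonneg (a_pos m k).le (by positivity)) 0
  exact mul_pos (a_pos m 0) (pow_pos hr2 _)

/-- closed-form product coefficient -/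
noncomputable def Φ (μ ν j : ℕ) : ℝ :=
  (μ+ν+2*j).factorial /
    (j.factorial * (μ+j).factorial * (ν+j).factorial * (μ+ν+j).factorial)

lemma Φ_pos (μ ν j : ℕ) : 0 < Φ μ ν j := by
  unfold Φ; positivity

lemma vandermonde (μ ν j : ℕ) :
    ∑ p ∈ Finset.HasAntidiagonal.antidiagonal j, j.choose p.1 * (μ+ν+j).choose (μ+p.1)
      = (μ+ν+2*j).choose (μ+j) := by
  have h := Nat.add_choose_eq j (μ+ν+j) (μ+j)
  have hidx : j + (μ+ν+j) = μ+ν+2*j := by ring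
  rw [hidx] at h
  rw [h]
  rw [Finset.Nat.sum_antidiagonal_eq_sum_range_succ_mk,
      Finset.Nat.sum_antidiagonal_eq_sum_range_succ_mk]
  simp only [Nat.succ_eq_add_one]
  rw [← Finset.sum_subset (Finset.range_subset_range.2 (by omega : j+1 ≤ μ+j+1))
      (fun x _ hx => by
        rw [Nat.choose_eq_zero_of_lt (by simpa [Nat.lt_succ_iff] using hx), zero_mul])]
  rw [← Finset.sum_range_reflect]
  apply Finset.sum_congr rfl
  intro k hk
  have hk' : k ≤ j := by simpa [Nat.lt_succ_iff] using hk
  congr 1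
  · rw [show j + 1 - 1 - k = j - k by omega, Nat.choose_symm hk']
  · congr 1; omega

lemma sum_a_mul_a (μ ν j : ℕ) :
    ∑ p ∈ Finset.HasAntidiagonal.antidiagonal j, a μ p.1 * a ν p.2 = Φ μ ν j := by
  have key : ∀ p ∈ Finset.HasAntidiagonal.antidiagonal j, a μ p.1 * a ν p.2
      = ((j.choose p.1 * (μ+ν+j).choose (μ+p.1) : ℕ) : ℝ)
        * (1 / (j.factorial * (μ+ν+j).factorial)) := by
    intro p hp
    rw [Finset.HasAntidiagonal.mem_antidiagonal] at hp
    obtain ⟨b1, b2⟩ := p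
    simp only at hp ⊢
    subst hp
    have h1 : (b1+b2).choose b1 * b1.factorial * b2.factorial = (b1+b2).factorial := by
      rw [Nat.choose_symm_add]; exact Nat.add_choose_mul_factorial_mul_factorial b1 b2
    have h2 : (μ+ν+(b1+b2)).choose (μ+b1) * (μ+b1).factorial * (ν+b2).factorial
        = (μ+ν+(b1+b2)).factorial := by
      have hidx : μ + b1 + (ν + b2) = μ+ν+(b1+b2) := by ring
      rw [Nat.choose_symm_of_eq_add (by omega : μ+ν+(b1+b2) = (μ+b1) + (ν+b2))]
      have := Nat.add_choose_mul_factorial_mul_factorial (μ+b1) (ν+b2)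
      rw [hidx] at this; exact this
    unfold a
    have c1 : ((b1+b2).choose b1 * b1.factorial * b2.factorial : ℝ)
        = (b1+b2).factorial := by exact_mod_cast congrArg Nat.cast h1
    have c2 : ((μ+ν+(b1+b2)).choose (μ+b1) * (μ+b1).factorial * (ν+b2).factorial : ℝ)
        = (μ+ν+(b1+b2)).factorial := by exact_mod_cast congrArg Nat.cast h2
    have f1 : (0:ℝ) < b1.factorial := by exact_mod_cast b1.factorial_pos
    have f2 : (0:ℝ) < b2.factorial := by exact_mod_cast b2.factorial_pos
    have f3 : (0:ℝ) < (μ+b1).factorial := by exact_mod_cast (μ+b1).factorial_pos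
    have f4 : (0:ℝ) < (ν+b2).factorial := by exact_mod_cast (ν+b2).factorial_pos
    have f5 : (0:ℝ) < (b1+b2).factorial := by exact_mod_cast (b1+b2).factorial_pos
    have f6 : (0:ℝ) < (μ+ν+(b1+b2)).factorial := by
      exact_mod_cast (μ+ν+(b1+b2)).factorial_pos
    push_cast
    field_simp
    nlinarith [mul_pos f1 f2, mul_pos f3 f4]
  rw [Finset.sum_congr rfl key, ← Finset.sum_mul]
  rw [← Nat.cast_sum, vandermonde]
  unfold Φ
  have h3 : (μ+ν+2*j).choose (μ+j) * (μ+j).factorial * (ν+j).factorial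
      = (μ+ν+2*j).factorial := by
    rw [Nat.choose_symm_of_eq_add (by omega : μ+ν+2*j = (μ+j) + (ν+j))]
    have := Nat.add_choose_mul_factorial_mul_factorial (μ+j) (ν+j)
    rw [show μ + j + (ν + j) = μ+ν+2*j by ring] at this; exact this
  have c3 : ((μ+ν+2*j).choose (μ+j) * (μ+j).factorial * (ν+j).factorial : ℝ)
      = (μ+ν+2*j).factorial := by exact_mod_cast congrArg Nat.cast h3
  have f1 : (0:ℝ) < j.factorial := by exact_mod_cast j.factorial_pos
  have f3 : (0:ℝ) < (μ+j).factorial := by exact_mod_cast (μ+j).factorial_pos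
  have f4 : (0:ℝ) < (ν+j).factorial := by exact_mod_cast (ν+j).factorial_pos
  have f6 : (0:ℝ) < (μ+ν+j).factorial := by exact_mod_cast (μ+ν+j).factorial_pos
  field_simp
  nlinarith [mul_pos f1 f6]

lemma besselI_mul (μ ν : ℕ) (r : ℝ) :
    besselI μ r * besselI ν r = ∑' j : ℕ, Φ μ ν j * (r/2) ^ (μ+ν+2*j) := by
  rw [besselI_eq, besselI_eq,
    tsum_mul_tsum_eq_tsum_sum_antidiagonal_of_summable_norm
      (summable_norm_term μ (r/2)) (summable_norm_term ν (r/2))]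
  congr 1; funext j
  have : ∀ p ∈ Finset.HasAntidiagonal.antidiagonal j,
      (a μ p.1 * (r/2) ^ (μ + 2*p.1)) * (a ν p.2 * (r/2) ^ (ν + 2*p.2))
        = (a μ p.1 * a ν p.2) * (r/2) ^ (μ+ν+2*j) := by
    intro p hp
    rw [Finset.HasAntidiagonal.mem_antidiagonal] at hp
    rw [show μ+ν+2*j = (μ + 2*p.1) + (ν + 2*p.2) by omega, pow_add]
    ring
  rw [Finset.sum_congr rfl this, ← Finset.sum_mul, sum_a_mul_a]

section Ratio

variable {f t : ℕ → ℝ} {L : ℝ}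

lemma summable_num (hf : ∀ j, 0 < f j) (ht0 : ∀ j, 0 ≤ t j) (htL : ∀ j, t j ≤ L)
    (hs : Summable fun j => f j * x ^ j) (hx : 0 ≤ x) :
    Summable fun j => t j * f j * x ^ j := by
  apply Summable.of_nonneg_of_le
    (fun j => mul_nonneg (mul_nonneg (ht0 j) (hf j).le) (pow_nonneg hx j))
    (fun j => ?_) (hs.mul_left L)
  have : t j * (f j * x ^ j) ≤ L * (f j * x ^ j) :=
    mul_le_mul_of_nonneg_right (htL j) (mul_nonneg (hf j).le (pow_nonneg hx j))
  linarith [this]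

lemma denom_pos (hf : ∀ j, 0 < f j) (hs : Summable fun j => f j * x ^ j) (hx : 0 ≤ x) :
    0 < ∑' j, f j * x ^ j := by
  apply Summable.tsum_pos hs (fun j => mul_nonneg (hf j).le (pow_nonneg hx j)) 0
  simpa using hf 0

set_option maxHeartbeats 1000000 in
lemma cross_lt (hf : ∀ j, 0 < f j) (ht : StrictMono t) (ht0 : ∀ j, 0 ≤ t j)
    (htL : ∀ j, t j ≤ L)
    (hs : ∀ x : ℝ, 0 ≤ x → Summable fun j => f j * x ^ j)
    {x y : ℝ} (hx : 0 < x) (hxy : x < y) :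
    (∑' j, t j * f j * x ^ j) * (∑' j, f j * y ^ j)
      < (∑' j, t j * f j * y ^ j) * (∑' j, f j * x ^ j) := by
  have hy : 0 < y := hx.trans hxy
  have Sfx := hs x hx.le
  have Sfy := hs y hy.le
  have Sgx := summable_num hf ht0 htL Sfx hx.le
  have Sgy := summable_num hf ht0 htL Sfy hy.le
  have nonneg : ∀ (z : ℝ), 0 ≤ z → ∀ j, 0 ≤ f j * z ^ j :=
    fun z hz j => mul_nonneg (hf j).le (pow_nonneg hz j)
  have nonneg' : ∀ (z : ℝ), 0 ≤ z → ∀ j, 0 ≤ t j * f j * z ^ j :=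
    fun z hz j => mul_nonneg (mul_nonneg (ht0 j) (hf j).le) (pow_nonneg hz j)
  have P1 : Summable fun p : ℕ × ℕ => (t p.1 * f p.1 * y ^ p.1) * (f p.2 * x ^ p.2) :=
    Summable.mul_of_nonneg Sgy Sfx (nonneg' y hy.le) (nonneg x hx.le)
  have P2 : Summable fun p : ℕ × ℕ => (t p.1 * f p.1 * x ^ p.1) * (f p.2 * y ^ p.2) :=
    Summable.mul_of_nonneg Sgx Sfy (nonneg' x hx.le) (nonneg y hy.le)
  rw [Summable.tsum_mul_tsum Sgx Sfy P2, Summable.tsum_mul_tsum Sgy Sfx P1]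
  rw [← sub_pos, ← Summable.tsum_sub P1 P2]
  set D : ℕ × ℕ → ℝ := fun p =>
    (t p.1 * f p.1 * y ^ p.1) * (f p.2 * x ^ p.2)
      - (t p.1 * f p.1 * x ^ p.1) * (f p.2 * y ^ p.2) with hD
  have SD : Summable D := P1.sub P2
  have SDswap : Summable fun p : ℕ × ℕ => D p.swap :=
    (Equiv.prodComm ℕ ℕ).summable_iff.2 SD
  have hswapsum : ∑' p : ℕ × ℕ, D p.swap = ∑' p : ℕ × ℕ, D p :=
    (Equiv.prodComm ℕ ℕ).tsum_eq D
  have key : 0 < ∑' p : ℕ × ℕ, (D p + D p.swap) := by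
    apply Summable.tsum_pos (SD.add SDswap) _ (0, 1)
    · -- positivity at (0,1)
      have h01 : t 0 < t 1 := ht (by norm_num)
      simp only [hD, Prod.swap]
      have e1 : (t 0 * f 0 * y ^ 0) * (f 1 * x ^ 1) - (t 0 * f 0 * x ^ 0) * (f 1 * y ^ 1)
          + ((t 1 * f 1 * y ^ 1) * (f 0 * x ^ 0) - (t 1 * f 1 * x ^ 1) * (f 0 * y ^ 0))
          = (t 1 - t 0) * (f 0 * f 1) * (y - x) := by ring
      rw [e1]
      exact mul_pos (mul_pos (by linarith) (mul_pos (hf 0) (hf 1))) (by linarith)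
    · rintro ⟨j, k⟩
      have hcase : ∀ j k : ℕ, j ≤ k → 0 ≤ D (j, k) + D (k, j) := by
        intro j k hjk
        obtain ⟨d, rfl⟩ := Nat.exists_eq_add_of_le hjk
        simp only [hD]
        have e2 : (t j * f j * y ^ j) * (f (j+d) * x ^ (j+d))
            - (t j * f j * x ^ j) * (f (j+d) * y ^ (j+d))
            + ((t (j+d) * f (j+d) * y ^ (j+d)) * (f j * x ^ j)
            - (t (j+d) * f (j+d) * x ^ (j+d)) * (f j * y ^ j))
            = (t (j+d) - t j) * (f j * f (j+d)) * ((x*y)^j) * (y ^ d - x ^ d) := by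
          rw [pow_add, pow_add, mul_pow]; ring
        rw [e2]
        have h1 : 0 ≤ t (j+d) - t j := by
          rcases Nat.eq_zero_or_pos d with hd | hd
          · simp [hd]
          · linarith [ht.le_iff_le.2 (by omega : j ≤ j + d)]
        have h2 : 0 ≤ y ^ d - x ^ d := by
          have := pow_le_pow_left₀ hx.le hxy.le d
          linarith
        exact mul_nonneg (mul_nonneg (mul_nonneg h1
          (mul_pos (hf j) (hf (j+d))).le)
          (pow_nonneg (mul_nonneg hx.le hy.le) j)) h2
      rcases le_total j k with h | h
      · exact hcase j k h
      · have := hcase k j h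
        simpa [add_comm] using this
  have : ∑' p : ℕ × ℕ, (D p + D p.swap) = 2 * ∑' p : ℕ × ℕ, D p := by
    rw [Summable.tsum_add SD SDswap, hswapsum]; ring
  rw [this] at key
  linarith

lemma ratio_strictMonoOn (hf : ∀ j, 0 < f j) (ht : StrictMono t) (ht0 : ∀ j, 0 ≤ t j)
    (htL : ∀ j, t j ≤ L)
    (hs : ∀ x : ℝ, 0 ≤ x → Summable fun j => f j * x ^ j) :
    StrictMonoOn (fun x => (∑' j, t j * f j * x ^ j) / (∑' j, f j * x ^ j)) (Ioi 0) := by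
  intro x hx y hy hxy
  simp only
  rw [div_lt_div_iff₀ (denom_pos hf (hs x (le_of_lt hx)) (le_of_lt hx))
    (denom_pos hf (hs y (le_of_lt hy)) (le_of_lt hy))]
  exact cross_lt hf ht ht0 htL hs hx hxy

set_option maxHeartbeats 1000000 in
lemma ratio_tendsto_zero (hf : ∀ j, 0 < f j) (ht0 : ∀ j, 0 ≤ t j)
    (htL : ∀ j, t j ≤ L) (ht00 : t 0 = 0)
    (hs : ∀ x : ℝ, 0 ≤ x → Summable fun j => f j * x ^ j) :
    Tendsto (fun x => (∑' j, t j * f j * x ^ j) / (∑' j, f j * x ^ j))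
      (nhdsWithin 0 (Ioi 0)) (nhds 0) := by
  have hL : 0 ≤ L := le_trans (ht0 0) (htL 0)
  -- constant K
  have hsum1 : Summable fun j => f (j+1) := by
    have h := (summable_nat_add_iff 1).2 (hs 1 zero_le_one)
    simpa using h
  set K : ℝ := L * ∑' j, f (j+1) with hK
  have hKnn : 0 ≤ K := mul_nonneg hL (tsum_nonneg (fun j => (hf _).le))
  have bound : ∀ x : ℝ, 0 < x → x ≤ 1 →
      (∑' j, t j * f j * x ^ j) / (∑' j, f j * x ^ j) ≤ (K / f 0) * x := by
    intro x hx hx1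
    have Sf := hs x hx.le
    have Sg := summable_num hf ht0 htL Sf hx.le
    have Sg' : Summable fun j => t (j+1) * f (j+1) * x ^ (j+1) :=
      (summable_nat_add_iff 1).2 Sg
    have hA : (∑' j, t j * f j * x ^ j) ≤ K * x := by
      rw [Summable.tsum_eq_zero_add Sg, ht00]
      simp only [zero_mul, pow_zero, mul_one, zero_add]
      have step : ∀ j : ℕ, t (j+1) * f (j+1) * x ^ (j+1) ≤ (L * f (j+1)) * x := by
        intro j
        have hxp : x ^ (j+1) ≤ x := by
          calc x ^ (j+1) ≤ x ^ 1 := pow_le_pow_of_le_one hx.le hx1 (by omega)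
          _ = x := pow_one x
        have h1 : t (j+1) * f (j+1) * x ^ (j+1) ≤ t (j+1) * f (j+1) * x :=
          mul_le_mul_of_nonneg_left hxp (mul_nonneg (ht0 _) (hf _).le)
        have h2 : t (j+1) * f (j+1) * x ≤ L * f (j+1) * x :=
          mul_le_mul_of_nonneg_right
            (mul_le_mul_of_nonneg_right (htL _) (hf _).le) hx.le
        linarith
      calc (∑' j, t (j+1) * f (j+1) * x ^ (j+1)) ≤ ∑' j, (L * f (j+1)) * x :=
          Summable.tsum_le_tsum step Sg' (by simpa using (hsum1.mul_left L).mul_right x)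
      _ = K * x := by rw [tsum_mul_right, tsum_mul_left, hK]
    have hB : f 0 ≤ ∑' j, f j * x ^ j := by
      have := Summable.le_tsum Sf 0 (fun j _ => mul_nonneg (hf j).le (pow_nonneg hx.le j))
      simpa using this
    have hBpos := denom_pos hf Sf hx.le
    rw [div_le_iff₀ hBpos]
    calc (∑' j, t j * f j * x ^ j) ≤ K * x := hA
    _ = (K / f 0) * x * f 0 := by
        field_simp
        rw [mul_div_cancel_right₀ _ (hf 0).ne']
    _ ≤ (K / f 0) * x * (∑' j, f j * x ^ j) :=
        mul_le_mul_of_nonneg_left hB (mul_nonneg (div_nonneg hKnn (hf 0).le) hx.le)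
  refine tendsto_of_tendsto_of_tendsto_of_le_of_le' (g := fun _ => (0:ℝ))
    (h := fun x => (K / f 0) * x) tendsto_const_nhds ?_ ?_ ?_
  · have : Tendsto (fun x : ℝ => (K / f 0) * x) (nhdsWithin 0 (Ioi 0)) (nhds ((K / f 0) * 0)) :=
      (tendsto_const_nhds.mul (tendsto_nhdsWithin_of_tendsto_nhds tendsto_id))
    simpa using this
  · -- lower bound eventually
    filter_upwards [self_mem_nhdsWithin] with x hx
    have Sf := hs x (le_of_lt hx)
    exact div_nonneg (tsum_nonneg (fun j =>
      mul_nonneg (mul_nonneg (ht0 j) (hf j).le) (pow_nonneg (le_of_lt hx) j)))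
      (tsum_nonneg (fun j => mul_nonneg (hf j).le (pow_nonneg (le_of_lt hx) j)))
  · filter_upwards [self_mem_nhdsWithin,
      Icc_mem_nhdsGT (by norm_num : (0:ℝ) < 1)] with x hx hx1
    exact bound x hx hx1.2

set_option maxHeartbeats 1000000 in
lemma finsum_div_tendsto_zero (hf : ∀ j, 0 < f j)
    (hs : ∀ x : ℝ, 0 ≤ x → Summable fun j => f j * x ^ j) (M : ℕ) :
    Tendsto (fun x : ℝ => (∑ j ∈ Finset.range M, f j * x ^ j) / (∑' j, f j * x ^ j))
      atTop (nhds 0) := by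
  rcases Nat.eq_zero_or_pos M with hM | hM
  · simp [hM]
  set C : ℝ := ∑ j ∈ Finset.range M, f j with hC
  have hCnn : 0 ≤ C := Finset.sum_nonneg (fun j _ => (hf j).le)
  have bound : ∀ x : ℝ, 1 ≤ x →
      (∑ j ∈ Finset.range M, f j * x ^ j) / (∑' j, f j * x ^ j) ≤ (C / f M) / x := by
    intro x hx
    have hx0 : (0:ℝ) < x := lt_of_lt_of_le one_pos hx
    have Sf := hs x hx0.le
    have hBpos := denom_pos hf Sf hx0.le
    have hBM : f M * x ^ M ≤ ∑' j, f j * x ^ j :=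
      Summable.le_tsum Sf M (fun j _ => mul_nonneg (hf j).le (pow_nonneg hx0.le j))
    have hS : (∑ j ∈ Finset.range M, f j * x ^ j) ≤ C * x ^ (M-1) := by
      have step : ∀ j ∈ Finset.range M, f j * x ^ j ≤ f j * x ^ (M - 1) := by
        intro j hj
        apply mul_le_mul_of_nonneg_left _ (hf j).le
        exact pow_le_pow_right₀ hx (by simp at hj; omega)
      calc (∑ j ∈ Finset.range M, f j * x ^ j) ≤ ∑ j ∈ Finset.range M, f j * x ^ (M-1) :=
          Finset.sum_le_sum step
      _ = C * x ^ (M-1) := by rw [← Finset.sum_mul]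
    have hxM : x ^ (M-1) * x = x ^ M := by
      rw [← pow_succ]
      congr 1
      omega
    have hfM := hf M
    rw [div_le_div_iff₀ hBpos hx0]
    calc (∑ j ∈ Finset.range M, f j * x ^ j) * x ≤ (C * x ^ (M-1)) * x :=
        mul_le_mul_of_nonneg_right hS hx0.le
    _ = C * x ^ M := by rw [mul_assoc, hxM]
    _ = (C / f M) * (f M * x ^ M) := by field_simp
    _ ≤ (C / f M) * (∑' j, f j * x ^ j) :=
        mul_le_mul_of_nonneg_left hBM (div_nonneg hCnn (hf M).le)
  refine tendsto_of_tendsto_of_tendsto_of_le_of_le' (g := fun _ => (0:ℝ))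
    (h := fun x => (C / f M) / x) tendsto_const_nhds
    (tendsto_const_nhds.div_atTop tendsto_id) ?_ ?_
  · filter_upwards [eventually_ge_atTop (1:ℝ)] with x hx
    have hx0 : (0:ℝ) < x := lt_of_lt_of_le one_pos hx
    exact div_nonneg (Finset.sum_nonneg (fun j _ =>
      mul_nonneg (hf j).le (pow_nonneg hx0.le j)))
      (tsum_nonneg (fun j => mul_nonneg (hf j).le (pow_nonneg hx0.le j)))
  · filter_upwards [eventually_ge_atTop (1:ℝ)] with x hx
    exact bound x hx

set_option maxHeartbeats 1000000 in
lemma ratio_tendsto_atTop (hf : ∀ j, 0 < f j) (hmono : Monotone t) (ht0 : ∀ j, 0 ≤ t j)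
    (htL : ∀ j, t j ≤ L) (htend : Tendsto t atTop (nhds L))
    (hs : ∀ x : ℝ, 0 ≤ x → Summable fun j => f j * x ^ j) :
    Tendsto (fun x => (∑' j, t j * f j * x ^ j) / (∑' j, f j * x ^ j)) atTop (nhds L) := by
  have hL : 0 ≤ L := le_trans (ht0 0) (htL 0)
  rw [Metric.tendsto_atTop]
  intro ε hε
  obtain ⟨N, hN⟩ := (htend.eventually
    (Metric.ball_mem_nhds L (by linarith : (0:ℝ) < ε/2))).exists
  have htN : L - ε/2 < t N := by
    rw [Real.dist_eq, abs_lt] at hN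
    linarith [hN.1]
  have hε' : 0 < ε/(2*(L+1)) := by positivity
  have hsmall := (finsum_div_tendsto_zero hf hs N).eventually_lt_const hε'
  obtain ⟨x₀, hx₀⟩ := (hsmall.and (eventually_ge_atTop (1:ℝ))).exists_forall_of_atTop
  refine ⟨x₀, fun x hx => ?_⟩
  obtain ⟨hsx, hx1⟩ := hx₀ x hx
  have hxpos : (0:ℝ) < x := lt_of_lt_of_le one_pos hx1
  have Sf := hs x hxpos.le
  have Sg := summable_num hf ht0 htL Sf hxpos.le
  have hBpos := denom_pos hf Sf hxpos.le
  set A := ∑' j, t j * f j * x ^ j with hA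
  set B := ∑' j, f j * x ^ j with hB
  set S := ∑ j ∈ Finset.range N, f j * x ^ j with hS
  have hSnn : 0 ≤ S := Finset.sum_nonneg fun j _ =>
    mul_nonneg (hf j).le (pow_nonneg hxpos.le j)
  have hupper : A ≤ L * B := by
    rw [hA, hB, ← tsum_mul_left]
    exact Summable.tsum_le_tsum (fun j => by
      have : t j * (f j * x ^ j) ≤ L * (f j * x ^ j) :=
        mul_le_mul_of_nonneg_right (htL j) (mul_nonneg (hf j).le (pow_nonneg hxpos.le j))
      calc t j * f j * x ^ j = t j * (f j * x ^ j) := by ring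
      _ ≤ L * (f j * x ^ j) := this) Sg (Sf.mul_left L)
  have hsplitB : S + (∑' j, f (j+N) * x ^ (j+N)) = B := Summable.sum_add_tsum_nat_add N Sf
  have hsplitA : (∑ j ∈ Finset.range N, t j * f j * x ^ j)
      + (∑' j, t (j+N) * f (j+N) * x ^ (j+N)) = A := Summable.sum_add_tsum_nat_add N Sg
  have SfN : Summable fun j => f (j+N) * x ^ (j+N) := (summable_nat_add_iff N).2 Sf
  have SgN : Summable fun j => t (j+N) * f (j+N) * x ^ (j+N) :=
    (summable_nat_add_iff N).2 Sg
  have hlow1 : t N * (B - S) ≤ ∑' j, t (j+N) * f (j+N) * x ^ (j+N) := by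
    have : ∀ j : ℕ, t N * (f (j+N) * x ^ (j+N)) ≤ t (j+N) * f (j+N) * x ^ (j+N) := by
      intro j
      have h1 : t N ≤ t (j+N) := hmono (by omega)
      have h2 : 0 ≤ f (j+N) * x ^ (j+N) :=
        mul_nonneg (hf _).le (pow_nonneg hxpos.le _)
      calc t N * (f (j+N) * x ^ (j+N)) ≤ t (j+N) * (f (j+N) * x ^ (j+N)) :=
          mul_le_mul_of_nonneg_right h1 h2
      _ = t (j+N) * f (j+N) * x ^ (j+N) := by ring
    have heq : t N * (B - S) = ∑' j, t N * (f (j+N) * x ^ (j+N)) := by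
      rw [tsum_mul_left]
      congr 1
      linarith [hsplitB]
    rw [heq]
    exact Summable.tsum_le_tsum this (SfN.mul_left (t N)) SgN
  have hlow : t N * (B - S) ≤ A := by
    have h0 : 0 ≤ ∑ j ∈ Finset.range N, t j * f j * x ^ j :=
      Finset.sum_nonneg fun j _ => mul_nonneg (mul_nonneg (ht0 j) (hf j).le)
        (pow_nonneg hxpos.le j)
    linarith [hsplitA, hlow1]
  -- combine
  have hFle : A / B ≤ L := by
    rw [div_le_iff₀ hBpos]
    linarith [hupper]
  have hFge : t N - t N * (S / B) ≤ A / B := by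
    rw [le_div_iff₀ hBpos]
    have : (t N - t N * (S / B)) * B = t N * (B - S) := by
      field_simp
    rw [this]
    exact hlow
  have htNL : t N ≤ L := htL N
  have hterm : t N * (S / B) ≤ L * (ε/(2*(L+1))) := by
    apply mul_le_mul htNL (le_of_lt hsx) (div_nonneg hSnn hBpos.le) hL
  have hfrac : L * (ε/(2*(L+1))) < ε/2 := by
    have h1 : (0:ℝ) < L + 1 := by linarith
    rw [show L * (ε/(2*(L+1))) = (L*ε)/(2*(L+1)) by ring,
      div_lt_div_iff₀ (by positivity) (by norm_num : (0:ℝ) < 2)]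
    nlinarith
  rw [Real.dist_eq, abs_lt]
  constructor
  · linarith
  · linarith

end Ratio

/-! ### Specific coefficients -/

noncomputable def Tn (n : ℕ) (j : ℕ) : ℝ := 2*((n:ℝ)-1)*j/(2*j+n+1)

lemma Tn_zero (n : ℕ) : Tn n 0 = 0 := by simp [Tn]

lemma Tn_denom_pos (n j : ℕ) : (0:ℝ) < 2*j+n+1 := by positivity

lemma Tn_nonneg {n : ℕ} (hn : 2 ≤ n) (j : ℕ) : 0 ≤ Tn n j := by
  have h2 : (2:ℝ) ≤ n := by exact_mod_cast hn
  have h1 : (0:ℝ) ≤ (n:ℝ) - 1 := by linarith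
  exact div_nonneg (mul_nonneg (mul_nonneg (by norm_num) h1) (Nat.cast_nonneg j))
    (Tn_denom_pos n j).le

lemma Tn_strictMono {n : ℕ} (hn : 2 ≤ n) : StrictMono (Tn n) := by
  intro j k hjk
  have h2 : (2:ℝ) ≤ n := by exact_mod_cast hn
  have hjk' : (j:ℝ) < k := by exact_mod_cast hjk
  unfold Tn
  rw [div_lt_div_iff₀ (Tn_denom_pos n j) (Tn_denom_pos n k)]
  nlinarith [mul_pos (show (0:ℝ) < (n:ℝ)-1 from by linarith)
    (mul_pos (show (0:ℝ) < (k:ℝ)-(j:ℝ) from by linarith)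
      (show (0:ℝ) < (n:ℝ)+1 from by linarith))]

lemma Tn_le {n : ℕ} (hn : 2 ≤ n) (j : ℕ) : Tn n j ≤ (n:ℝ) - 1 := by
  have h2 : (2:ℝ) ≤ n := by exact_mod_cast hn
  unfold Tn
  rw [div_le_iff₀ (Tn_denom_pos n j)]
  nlinarith [Nat.cast_nonneg (α := ℝ) j]

lemma Tn_tendsto {n : ℕ} (hn : 2 ≤ n) : Tendsto (Tn n) atTop (nhds ((n:ℝ) - 1)) := by
  have h2 : (2:ℝ) ≤ n := by exact_mod_cast hn
  have heq : ∀ j : ℕ, Tn n j = ((n:ℝ)-1) * (1 - ((n:ℝ)+1)/(2*j+n+1)) := by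
    intro j
    have := Tn_denom_pos n j
    unfold Tn
    field_simp
    ring
  have hden : Tendsto (fun j : ℕ => 2*(j:ℝ)+n+1) atTop atTop := by
    apply tendsto_atTop_add_const_right
    apply tendsto_atTop_add_const_right
    exact (tendsto_natCast_atTop_atTop).const_mul_atTop (by norm_num : (0:ℝ) < 2)
  have h0 : Tendsto (fun j : ℕ => ((n:ℝ)+1)/(2*j+n+1)) atTop (nhds 0) :=
    tendsto_const_nhds.div_atTop hden
  have hmain : Tendsto (fun j : ℕ => ((n:ℝ)-1) * (1 - ((n:ℝ)+1)/(2*j+n+1))) atTop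
      (nhds (((n:ℝ)-1) * (1 - 0))) :=
    Tendsto.mul tendsto_const_nhds (Tendsto.sub tendsto_const_nhds h0)
  simp only [sub_zero, mul_one] at hmain
  exact Tendsto.congr (fun j => (heq j).symm) hmain

lemma Φ_le (μ ν j : ℕ) : Φ μ ν j ≤ 2^(μ+ν) * 4^j / j.factorial := by
  have hch : (((μ+ν+2*j).choose j : ℕ) : ℝ) * (μ+ν+j).factorial * j.factorial
      = (μ+ν+2*j).factorial := by
    have h := Nat.add_choose_mul_factorial_mul_factorial (μ+ν+j) j
    rw [show μ+ν+j+j = μ+ν+2*j by ring] at h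
    exact_mod_cast congrArg Nat.cast h
  have hΦ : Φ μ ν j = ((μ+ν+2*j).choose j : ℝ) / ((μ+j).factorial * (ν+j).factorial) := by
    unfold Φ
    rw [div_eq_div_iff (by positivity) (by positivity)]
    rw [← hch]
    ring
  rw [hΦ]
  have hle1 : (((μ+ν+2*j).choose j : ℕ) : ℝ) ≤ 2^(μ+ν) * 4^j := by
    have := choose_le_two_pow (μ+ν+2*j) j
    have h2 : (2:ℕ)^(μ+ν+2*j) = 2^(μ+ν) * 4^j := by
      rw [pow_add, pow_mul]
      norm_num
    calc (((μ+ν+2*j).choose j : ℕ) : ℝ) ≤ ((2^(μ+ν+2*j) : ℕ) : ℝ) := by exact_mod_cast this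
    _ = 2^(μ+ν) * 4^j := by rw [h2]; push_cast; ring
  have hge : (j.factorial : ℝ) ≤ ((μ+j).factorial * (ν+j).factorial : ℝ) := by
    have h1 : j.factorial ≤ (μ+j).factorial :=
      Nat.factorial_le (by omega)
    have h2 : 1 ≤ (ν+j).factorial := (ν+j).factorial_pos
    have := Nat.mul_le_mul h1 h2
    calc (j.factorial : ℝ) = ((j.factorial * 1 : ℕ) : ℝ) := by norm_num
    _ ≤ (((μ+j).factorial * (ν+j).factorial : ℕ) : ℝ) := by exact_mod_cast this
    _ = _ := by push_cast; ring
  exact div_le_div₀ (by positivity) hle1 (by positivity) hge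

lemma summable_Φ_xpow (μ ν : ℕ) {x : ℝ} (hx : 0 ≤ x) :
    Summable fun j => Φ μ ν j * x ^ j := by
  apply Summable.of_nonneg_of_le (fun j => mul_nonneg (Φ_pos μ ν j).le (pow_nonneg hx j))
    (fun j => ?_) ((Real.summable_pow_div_factorial (4*x)).mul_left (2^(μ+ν)))
  calc Φ μ ν j * x ^ j ≤ (2^(μ+ν) * 4^j / j.factorial) * x ^ j :=
      mul_le_mul_of_nonneg_right (Φ_le μ ν j) (pow_nonneg hx j)
  _ = 2^(μ+ν) * ((4*x)^j / j.factorial) := by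
      rw [mul_pow]
      ring

set_option maxHeartbeats 1000000 in
lemma coeff_id (n j : ℕ) (hn : 2 ≤ n) :
    2 * (Φ 2 n j - Φ 1 (n+1) j) = Tn n (j+1) * Φ 1 n (j+1) := by
  unfold Φ Tn
  rw [show 1+(n+1)+2*j = 2+n+2*j from by ring]
  rw [show 1+(n+1)+j = 2+n+j from by ring]
  have hA1 : (((2+j).factorial : ℕ) : ℝ) = ((j:ℝ)+2)*((j:ℝ)+1)*j.factorial := by
    rw [show 2+j = (j+1)+1 from by omega, Nat.factorial_succ, Nat.factorial_succ]
    push_cast; ring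
  have hA2 : (((1+j).factorial : ℕ) : ℝ) = ((j:ℝ)+1)*j.factorial := by
    rw [show 1+j = j+1 from by omega, Nat.factorial_succ]
    push_cast; ring
  have hA3 : (((n+1+j).factorial : ℕ) : ℝ) = ((n:ℝ)+1+j)*(n+j).factorial := by
    rw [show n+1+j = (n+j)+1 from by omega, Nat.factorial_succ]
    push_cast; ring
  have hA4 : (((2+n+j).factorial : ℕ) : ℝ)
      = ((n:ℝ)+2+j)*((n:ℝ)+1+j)*(n+j).factorial := by
    rw [show 2+n+j = ((n+j)+1)+1 from by omega, Nat.factorial_succ, Nat.factorial_succ]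
    push_cast; ring
  have hA6 : (((1+n+2*(j+1)).factorial : ℕ) : ℝ)
      = ((n:ℝ)+3+2*j)*(2+n+2*j).factorial := by
    rw [show 1+n+2*(j+1) = (2+n+2*j)+1 from by omega, Nat.factorial_succ]
    push_cast; ring
  have hA7 : (((j+1).factorial : ℕ) : ℝ) = ((j:ℝ)+1)*j.factorial := by
    rw [Nat.factorial_succ]; push_cast; ring
  have hA8 : (((1+(j+1)).factorial : ℕ) : ℝ) = ((j:ℝ)+2)*((j:ℝ)+1)*j.factorial := by
    rw [show 1+(j+1) = (j+1)+1 from by omega, Nat.factorial_succ, Nat.factorial_succ]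
    push_cast; ring
  have hA9 : (((n+(j+1)).factorial : ℕ) : ℝ) = ((n:ℝ)+1+j)*(n+j).factorial := by
    rw [show n+(j+1) = (n+j)+1 from by omega, Nat.factorial_succ]
    push_cast; ring
  have hA10 : (((1+n+(j+1)).factorial : ℕ) : ℝ)
      = ((n:ℝ)+2+j)*((n:ℝ)+1+j)*(n+j).factorial := by
    rw [show 1+n+(j+1) = ((n+j)+1)+1 from by omega, Nat.factorial_succ, Nat.factorial_succ]
    push_cast; ring
  rw [hA1, hA2, hA3, hA4, hA6, hA7, hA8, hA9, hA10]
  have hfj : ((j.factorial : ℕ) : ℝ) ≠ 0 := by positivity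
  have hfnj : (((n+j).factorial : ℕ) : ℝ) ≠ 0 := by positivity
  have hftop : (((2+n+2*j).factorial : ℕ) : ℝ) ≠ 0 := by positivity
  have hj1 : ((j:ℝ)+1) ≠ 0 := by positivity
  have hj2 : ((j:ℝ)+2) ≠ 0 := by positivity
  have hn1 : ((n:ℝ)+1+j) ≠ 0 := by positivity
  have hn2 : ((n:ℝ)+2+j) ≠ 0 := by positivity
  have hn3 : ((n:ℝ)+3+2*j) ≠ 0 := by positivity
  have hden : (2*((j:ℕ):ℝ)+2+(n:ℝ)+1) ≠ 0 := by positivity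
  push_cast
  field_simp
  ring

set_option maxHeartbeats 1000000 in
lemma G_eq (n : ℕ) (hn : 2 ≤ n) {r : ℝ} (hr : 0 < r) :
    r^2 * (P 1 r - P n r)
      = (∑' j, Tn n j * Φ 1 n j * ((r/2)^2) ^ j) / (∑' j, Φ 1 n j * ((r/2)^2) ^ j) := by
  have hr2 : (0:ℝ) < r/2 := by linarith
  set x : ℝ := (r/2)^2 with hxdef
  have hx : 0 < x := by positivity
  have hI1 := besselI_pos 1 hr
  have hIn := besselI_pos n hr
  have hmul1 : besselI 1 r * besselI n r = (r/2)^(n+1) * ∑' j, Φ 1 n j * x ^ j := by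
    rw [besselI_mul, ← tsum_mul_left]
    congr 1; funext j
    rw [show 1+n+2*j = (n+1)+2*j from by ring, pow_add, pow_mul, hxdef]
    ring
  have hmul2 : besselI 2 r * besselI n r = (r/2)^(n+2) * ∑' j, Φ 2 n j * x ^ j := by
    rw [besselI_mul, ← tsum_mul_left]
    congr 1; funext j
    rw [show 2+n+2*j = (n+2)+2*j from by ring, pow_add, pow_mul, hxdef]
    ring
  have hmul3 : besselI 1 r * besselI (n+1) r
      = (r/2)^(n+2) * ∑' j, Φ 1 (n+1) j * x ^ j := by
    rw [besselI_mul, ← tsum_mul_left]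
    congr 1; funext j
    rw [show 1+(n+1)+2*j = (n+2)+2*j from by ring, pow_add, pow_mul, hxdef]
    ring
  have Sc := summable_Φ_xpow 2 n hx.le
  have Sd := summable_Φ_xpow 1 (n+1) hx.le
  have SB := summable_Φ_xpow 1 n hx.le
  have SA : Summable fun j => Tn n j * Φ 1 n j * x ^ j :=
    summable_num (fun j => Φ_pos 1 n j) (Tn_nonneg hn) (Tn_le hn) SB hx.le
  have hdiff : (∑' j, Φ 2 n j * x ^ j) - (∑' j, Φ 1 (n+1) j * x ^ j)
      = ∑' j, (Φ 2 n j - Φ 1 (n+1) j) * x ^ j := by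
    rw [← Summable.tsum_sub Sc Sd]
    congr 1; funext j; ring
  have hA : (∑' j, Tn n j * Φ 1 n j * x ^ j)
      = 2 * x * ∑' j, (Φ 2 n j - Φ 1 (n+1) j) * x ^ j := by
    rw [Summable.tsum_eq_zero_add SA]
    rw [Tn_zero]
    simp only [zero_mul, pow_zero, mul_one, zero_add]
    rw [← tsum_mul_left]
    congr 1; funext j
    rw [show Tn n (j+1) * Φ 1 n (j+1) = 2*(Φ 2 n j - Φ 1 (n+1) j) from
      (coeff_id n j hn).symm, pow_succ]
    ring
  have hP : r^2 * (P 1 r - P n r)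
      = r * ((besselI 2 r * besselI n r - besselI 1 r * besselI (n+1) r)
          / (besselI 1 r * besselI n r)) := by
    unfold P
    field_simp
  have hrp : ((r:ℝ)/2)^(n+1) ≠ 0 := by positivity
  set E := ∑' j, (Φ 2 n j - Φ 1 (n+1) j) * x ^ j with hE
  set B := ∑' j, Φ 1 n j * x ^ j with hB
  rw [hP, hmul2, hmul3, hmul1, ← mul_sub, hdiff, hA, pow_succ]
  rw [mul_assoc ((r/2)^(n+1)) (r/2) E, mul_div_mul_left ((r/2)*E) B hrp,
    ← mul_div_assoc]
  congr 1
  rw [hxdef]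
  ring

end BesselAux

open BesselAux in
theorem G_strictMono_and_limits (n : ℕ) (hn : 2 ≤ n) :
    StrictMonoOn (fun r : ℝ => r ^ 2 * (P 1 r - P n r)) (Set.Ioi 0) ∧
    Tendsto (fun r : ℝ => r ^ 2 * (P 1 r - P n r)) (nhdsWithin 0 (Set.Ioi 0)) (nhds 0) ∧
    Tendsto (fun r : ℝ => r ^ 2 * (P 1 r - P n r)) atTop (nhds ((n : ℝ) - 1)) := by
  have hfpos : ∀ j, 0 < Φ 1 n j := fun j => Φ_pos 1 n j
  have hsum : ∀ x : ℝ, 0 ≤ x → Summable fun j => Φ 1 n j * x ^ j :=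
    fun x hx => summable_Φ_xpow 1 n hx
  refine ⟨?_, ?_, ?_⟩
  · intro r1 h1 r2 h2 h12
    rw [Set.mem_Ioi] at h1 h2
    simp only
    rw [G_eq n hn h1, G_eq n hn h2]
    refine ratio_strictMonoOn hfpos (Tn_strictMono hn) (Tn_nonneg hn) (Tn_le hn) hsum
      ?_ ?_ ?_
    · simp only [Set.mem_Ioi]; positivity
    · simp only [Set.mem_Ioi]; positivity
    · nlinarith
  · have hF := ratio_tendsto_zero hfpos (Tn_nonneg hn) (Tn_le hn) (Tn_zero n) hsum
    have hsq : Tendsto (fun r : ℝ => (r/2)^2) (nhdsWithin 0 (Ioi 0)) (nhdsWithin 0 (Ioi 0)) := by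
      apply tendsto_nhdsWithin_of_tendsto_nhds_of_eventually_within
      · have hc : Continuous fun r : ℝ => (r/2)^2 := by continuity
        have h0 := hc.tendsto 0
        norm_num at h0
        exact h0.mono_left nhdsWithin_le_nhds
      · filter_upwards [self_mem_nhdsWithin] with r hr
        rw [Set.mem_Ioi] at hr ⊢
        positivity
    apply Tendsto.congr' _ (hF.comp hsq)
    filter_upwards [self_mem_nhdsWithin] with r hr
    rw [Set.mem_Ioi] at hr
    exact (G_eq n hn hr).symm
  · have hF := ratio_tendsto_atTop hfpos (Tn_strictMono hn).monotone (Tn_nonneg hn)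
      (Tn_le hn) (Tn_tendsto hn) hsum
    have hsq : Tendsto (fun r : ℝ => (r/2)^2) atTop atTop := by
      apply (tendsto_pow_atTop (by norm_num : 2 ≠ 0)).comp
      exact tendsto_id.atTop_div_const (by norm_num : (0:ℝ) < 2)
    apply Tendsto.congr' _ (hF.comp hsq)
    filter_upwards [eventually_gt_atTop (0:ℝ)] with r hr
    exact (G_eq n hn hr).symm
end
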